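/- Let f be a nonconstant entire function with M(1,f) ≥ 1, let n ≥ 1 be an integer, let R > 1, and set S = R^{2+2/(2n+1)}. Suppose t ≥ S satisfies log m(t,f) > (1 − 2/(2n+1)³) log M(S,f), and suppose furthermore that [(1 − 2/(2n+1)³)(2 + 2/(2n+1)) − (2 + 1/(n+1))] · log M(R,f) > (1 − 2/(2n+1)³)(2 + 2/(2n+1)) · log M(1,f). Then m(t,f) > M(R,f)^{2+1/(n+1)}. -/

import Mathlib

open Filter MeasureTheory

/-- The maximum modulus `M(r,f) = max_{|z|=r} |f z|`. -/
noncomputable def maxMod (f : ℂ → ℂ) (r : ℝ) : ℝ :=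
  sSup ((fun z => ‖f z‖) '' Metric.sphere (0 : ℂ) r)

/-- The minimum modulus `m(r,f) = min_{|z|=r} |f z|`. -/
noncomputable def minMod (f : ℂ → ℂ) (r : ℝ) : ℝ :=
  sInf ((fun z => ‖f z‖) '' Metric.sphere (0 : ℂ) r)

/-- The upper logarithmic density of a set `E ⊆ (1,∞)`:
`limsup_{R→∞} (1/log R) ∫_{E∩(1,R)} dt/t`. -/
noncomputable def upperLogDens (E : Set ℝ) : ℝ :=
  Filter.limsup (fun R : ℝ => (Real.log R)⁻¹ * ∫ t in E ∩ Set.Ioo 1 R, t⁻¹) Filter.atTop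

/-- `f` is a transcendental entire function: entire and not a polynomial. -/
def TranscendentalEntire (f : ℂ → ℂ) : Prop :=
  Differentiable ℂ f ∧ ¬ ∃ p : Polynomial ℂ, ∀ z, f z = p.eval z

/-- The order `λ(f) = limsup_{r→∞} log log M(r,f) / log r`, as an extended real. -/
noncomputable def eOrder (f : ℂ → ℂ) : EReal :=
  Filter.limsup
    (fun r : ℝ => ((Real.log (Real.log (maxMod f r)) / Real.log r : ℝ) : EReal))
    Filter.atTop

/-- The lower order `ρ(f) = liminf_{r→∞} log log M(r,f) / log r`, as an extended real. -/
noncomputable def eLowerOrder (f : ℂ → ℂ) : EReal :=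
  Filter.liminf
    (fun r : ℝ => ((Real.log (Real.log (maxMod f r)) / Real.log r : ℝ) : EReal))
    Filter.atTop

lemma abs_le_maxMod (f : ℂ → ℂ) (hf : Continuous f) {r : ℝ} {z : ℂ}
    (hz : ‖z‖ = r) : ‖f z‖ ≤ maxMod f r := by
  refine le_csSup ((isCompact_sphere (0:ℂ) r).image (continuous_norm.comp hf)).bddAbove ?_
  exact Set.mem_image_of_mem _ (by simpa [mem_sphere_zero_iff_norm] using hz)

lemma maxMod_le (f : ℂ → ℂ) {r C : ℝ} (hr : 0 ≤ r)
    (h : ∀ z : ℂ, ‖z‖ = r → ‖f z‖ ≤ C) : maxMod f r ≤ C := by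
  apply csSup_le
  · exact (NormedSpace.sphere_nonempty.mpr hr).image _
  · rintro b ⟨z, hz, rfl⟩
    exact h z (by simpa [mem_sphere_zero_iff_norm] using hz)

lemma maxMod_mono (f : ℂ → ℂ) (hf : Differentiable ℂ f) {r r' : ℝ}
    (hr : 0 ≤ r) (hr' : 0 < r') (h : r ≤ r') : maxMod f r ≤ maxMod f r' := by
  refine maxMod_le f hr fun z hz => ?_
  have := Complex.norm_le_of_forall_mem_frontier_norm_le (U := Metric.ball (0:ℂ) r')
    Metric.isBounded_ball hf.diffContOnCl (C := maxMod f r') ?_ (z := z) ?_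
  · simpa using this
  · intro w hw
    rw [frontier_ball (0:ℂ) hr'.ne'] at hw
    simpa using abs_le_maxMod f hf.continuous (by simpa [mem_sphere_zero_iff_norm] using hw)
  · rw [closure_ball (0:ℂ) hr'.ne']
    simp only [Metric.mem_closedBall, dist_zero_right]
    rw [hz]; exact h

/-- Hadamard three-circles theorem, in logarithmic form. -/
lemma threeCircles (f : ℂ → ℂ) (hf : Differentiable ℂ f) {S r : ℝ}
    (hS : 1 < S) (hr1 : 1 ≤ r) (hrS : r ≤ S) (hM1 : 1 ≤ maxMod f 1) :
    Real.log (maxMod f r) ≤ (1 - Real.log r / Real.log S) * Real.log (maxMod f 1)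
      + (Real.log r / Real.log S) * Real.log (maxMod f S) := by
  have hS0 : (0:ℝ) < S := lt_trans one_pos hS
  have hlS : 0 < Real.log S := Real.log_pos hS
  set x : ℝ := Real.log r / Real.log S with hxdef
  have hx0 : 0 ≤ x := div_nonneg (Real.log_nonneg hr1) hlS.le
  have hx1 : x ≤ 1 := by
    rw [div_le_one hlS]
    exact Real.log_le_log (lt_of_lt_of_le one_pos hr1) hrS
  have hM10 : (0:ℝ) < maxMod f 1 := lt_of_lt_of_le one_pos hM1
  have hMS : 1 ≤ maxMod f S := le_trans hM1 (maxMod_mono f hf zero_le_one hS0 hS.le)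
  have hMS0 : (0:ℝ) < maxMod f S := lt_of_lt_of_le one_pos hMS
  -- the rpow form
  have key : maxMod f r ≤ maxMod f 1 ^ (1 - x) * maxMod f S ^ x := by
    refine maxMod_le f (le_trans zero_le_one hr1) fun z hz => ?_
    have hz0 : z ≠ 0 := by
      intro h; rw [h, norm_zero] at hz; linarith
    set g : ℂ → ℂ := fun u => f (Complex.exp (u * (Real.log S : ℂ))) with hg
    set w : ℂ := Complex.log z / (Real.log S : ℝ) with hw
    have hwre : w.re = x := by
      rw [hw, Complex.div_ofReal_re, Complex.log_re, hz]
    have hgw : g w = f z := by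
      show f (Complex.exp (Complex.log z / (Real.log S:ℂ) * (Real.log S:ℂ))) = f z
      rw [div_mul_cancel₀ _ (Complex.ofReal_ne_zero.mpr hlS.ne'), Complex.exp_log hz0]
    have habs : ∀ u : ℂ, ‖Complex.exp (u * (Real.log S : ℂ))‖
        = Real.exp (u.re * Real.log S) := by
      intro u
      rw [Complex.norm_exp]
      congr 1
      simp [Complex.mul_re]
    have hgd : Differentiable ℂ g :=
      hf.comp (Complex.differentiable_exp.comp ((differentiable_id).mul_const _))
    obtain ⟨C, hC⟩ := (isCompact_closedBall (0:ℂ) S).exists_bound_of_continuousOn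
      hf.continuous.continuousOn
    have hb : ∀ u : ℂ, u.re ∈ Set.Icc (0:ℝ) 1 → ‖Complex.exp (u * (Real.log S : ℂ))‖ ≤ S := by
      intro u hu
      rw [habs]
      calc Real.exp (u.re * Real.log S) ≤ Real.exp (1 * Real.log S) := by
            apply Real.exp_le_exp.mpr
            exact mul_le_mul_of_nonneg_right hu.2 hlS.le
        _ = S := by rw [one_mul, Real.exp_log hS0]
    have H := Complex.HadamardThreeLines.norm_le_interp_of_mem_verticalClosedStrip₀₁' g
      (z := w) (a := maxMod f 1) (b := maxMod f S) ?_ hgd.diffContOnCl ?_ ?_ ?_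
    · rw [hgw, hwre] at H
      simpa using H
    · show w.re ∈ Set.Icc (0:ℝ) 1
      rw [hwre]; exact ⟨hx0, hx1⟩
    · refine ⟨C, ?_⟩
      rintro v ⟨u, hu, rfl⟩
      refine hC _ ?_
      simp only [Metric.mem_closedBall, dist_zero_right]
      exact hb u hu
    · intro u hu
      have : ‖Complex.exp (u * (Real.log S : ℂ))‖ = 1 := by
        rw [habs, Set.mem_preimage, Set.mem_singleton_iff] at *
        rw [hu]; simp
      simpa using abs_le_maxMod f hf.continuous this
    · intro u hu
      have : ‖Complex.exp (u * (Real.log S : ℂ))‖ = S := by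
        rw [habs, Set.mem_preimage, Set.mem_singleton_iff] at *
        rw [hu, one_mul, Real.exp_log hS0]
      simpa using abs_le_maxMod f hf.continuous this
  have hMr0 : (0:ℝ) < maxMod f r := lt_of_lt_of_le one_pos
    (le_trans hM1 (maxMod_mono f hf zero_le_one (lt_of_lt_of_le one_pos hr1) hr1))
  calc Real.log (maxMod f r) ≤ Real.log (maxMod f 1 ^ (1 - x) * maxMod f S ^ x) :=
        Real.log_le_log hMr0 key
    _ = (1 - x) * Real.log (maxMod f 1) + x * Real.log (maxMod f S) := by
        rw [Real.log_mul (Real.rpow_pos_of_pos hM10 _).ne' (Real.rpow_pos_of_pos hMS0 _).ne',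
          Real.log_rpow hM10, Real.log_rpow hMS0]

theorem stmt_8 (f : ℂ → ℂ) (hf : Differentiable ℂ f)
    (hnc : ¬ ∃ c : ℂ, f = fun _ => c)
    (hM1 : 1 ≤ maxMod f 1) (n : ℕ) (hn : 1 ≤ n) (R : ℝ) (hR : 1 < R)
    (t : ℝ) (ht : R ^ ((2:ℝ) + 2 / (2 * (n:ℝ) + 1)) ≤ t)
    (hm : Real.log (minMod f t) >
      (1 - 2 / (2 * (n:ℝ) + 1) ^ 3) *
        Real.log (maxMod f (R ^ ((2:ℝ) + 2 / (2 * (n:ℝ) + 1)))))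
    (hbig : ((1 - 2 / (2 * (n:ℝ) + 1) ^ 3) * (2 + 2 / (2 * (n:ℝ) + 1))
        - (2 + 1 / ((n:ℝ) + 1))) * Real.log (maxMod f R)
      > (1 - 2 / (2 * (n:ℝ) + 1) ^ 3) * (2 + 2 / (2 * (n:ℝ) + 1)) *
          Real.log (maxMod f 1)) :
    minMod f t > maxMod f R ^ ((2:ℝ) + 1 / ((n:ℝ) + 1)) := by
  have hn1 : (1:ℝ) ≤ (n:ℝ) := by exact_mod_cast hn
  set c : ℝ := 2 + 2 / (2 * (n:ℝ) + 1) with hc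
  set q : ℝ := 2 + 1 / ((n:ℝ) + 1) with hq
  set α : ℝ := 1 - 2 / (2 * (n:ℝ) + 1) ^ 3 with hα
  have hden : (0:ℝ) < 2 * (n:ℝ) + 1 := by linarith
  have hc1 : 2 < c := by
    rw [hc]; have : 0 < 2 / (2 * (n:ℝ) + 1) := by positivity
    linarith
  have hα0 : 0 < α := by
    rw [hα]
    have h1 : (27:ℝ) ≤ (2 * (n:ℝ) + 1) ^ 3 := by
      calc (27:ℝ) = 3 ^ 3 := by norm_num
        _ ≤ (2 * (n:ℝ) + 1) ^ 3 := by gcongr <;> linarith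
    have h2 : 2 / (2 * (n:ℝ) + 1) ^ 3 ≤ 2 / 27 := by
      apply div_le_div_of_nonneg_left (by norm_num) (by norm_num) h1
    linarith
  set S : ℝ := R ^ c with hSdef
  have hS1 : 1 < S := (Real.one_lt_rpow_iff_of_pos (lt_trans one_pos hR)).mpr
    (Or.inl ⟨hR, by linarith⟩)
  have hRS : R ≤ S := by
    calc R = R ^ (1:ℝ) := (Real.rpow_one R).symm
      _ ≤ S := Real.rpow_le_rpow_of_exponent_le hR.le (by linarith)
  have hlogS : Real.log S = c * Real.log R := Real.log_rpow (lt_trans one_pos hR) c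
  have hlR : 0 < Real.log R := Real.log_pos hR
  -- three circles at r = R between 1 and S
  have h3 := threeCircles f hf hS1 hR.le hRS hM1
  have hxval : Real.log R / Real.log S = 1 / c := by
    rw [hlogS]; field_simp
  rw [hxval] at h3
  set L1 : ℝ := Real.log (maxMod f 1) with hL1
  set LR : ℝ := Real.log (maxMod f R) with hLR
  set LS : ℝ := Real.log (maxMod f S) with hLS
  have hL10 : 0 ≤ L1 := Real.log_nonneg hM1
  have hMR1 : 1 ≤ maxMod f R :=
    le_trans hM1 (maxMod_mono f hf zero_le_one (lt_trans one_pos hR) hR.le)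
  have hMR0 : (0:ℝ) < maxMod f R := lt_of_lt_of_le one_pos hMR1
  have hLR0 : 0 ≤ LR := Real.log_nonneg hMR1
  have hc0 : (0:ℝ) < c := by linarith
  -- from h3 : LR ≤ (1 - 1/c) L1 + (1/c) LS, deduce c LR ≤ (c-1) L1 + LS
  have h3' : c * LR ≤ (c - 1) * L1 + LS := by
    have := mul_le_mul_of_nonneg_left h3 hc0.le
    calc c * LR ≤ c * ((1 - 1/c) * L1 + 1/c * LS) := this
      _ = (c - 1) * L1 + LS := by field_simp
  -- the key log inequality: log (minMod f t) > q * LR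
  have hmain : Real.log (minMod f t) > q * LR := by
    have hαLS : α * (c * LR - (c - 1) * L1) ≤ α * LS :=
      mul_le_mul_of_nonneg_left (by linarith) hα0.le
    have hαL1 : 0 ≤ α * L1 := mul_nonneg hα0.le hL10
    -- hbig : (α * c - q) * LR > α * c * L1
    nlinarith [hm, hbig, hαLS, hαL1]
  -- conclude
  have hq0 : 0 ≤ q * LR := mul_nonneg (by positivity) hLR0
  have ht0 : (0:ℝ) < t := lt_of_lt_of_le (lt_trans one_pos hS1) ht
  have hmt_nn : 0 ≤ minMod f t := by
    apply le_csInf ((NormedSpace.sphere_nonempty.mpr ht0.le).image _)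
    rintro b ⟨z, hz, rfl⟩
    exact norm_nonneg _
  have hmt0 : (0:ℝ) < minMod f t := by
    rcases hmt_nn.lt_or_eq with h | h
    · exact h
    · exfalso; rw [← h, Real.log_zero] at hmain; linarith
  calc maxMod f R ^ ((2:ℝ) + 1 / ((n:ℝ) + 1)) = Real.exp (q * LR) := by
        rw [Real.rpow_def_of_pos hMR0]; congr 1; rw [hq, hLR]; ring
    _ < Real.exp (Real.log (minMod f t)) := Real.exp_lt_exp.mpr hmain
    _ = minMod f t := Real.exp_log hmt0
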